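/- If d ≥ 2, then with probability one only finitely many of the vectors X_1, X_2, … are complete records, i.e. the total number of complete records ∑_{m ∈ ℕ} I_m is finite almost surely. -/

import Mathlib

open MeasureTheory ProbabilityTheory Filter Topology

open scoped ENNReal NNReal

noncomputable section

/-- `X m` is a complete record: each of its components strictly exceeds the corresponding
component of all previous observations `X i`, `1 ≤ i < m`.  In particular `X 1` is a
complete record by convention (vacuously). -/
def IsCompleteRecord {Ω : Type*} {d : ℕ} (X : ℕ → Ω → Fin d → ℝ) (m : ℕ) (ω : Ω) : Prop :=
  ∀ i, 1 ≤ i → i < m → ∀ j, X i ω j < X m ω j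

/-- Under a product of `n+1` copies of a probability measure `ν` on `ℝ`, the probability that
the last coordinate strictly exceeds all the others is at most `1/(n+1)`. -/
lemma pi_measure_strictMax_le (ν : Measure ℝ) [IsProbabilityMeasure ν] (n : ℕ) :
    Measure.pi (fun _ : Fin (n + 1) => ν)
      {w | ∀ k, k ≠ Fin.last n → w k < w (Fin.last n)} ≤ ((n : ℝ≥0∞) + 1)⁻¹ := by
  classical
  set μpi := Measure.pi (fun _ : Fin (n + 1) => ν) with hμpi
  set T : Fin (n + 1) → Set (Fin (n + 1) → ℝ) :=
    fun i => {w | ∀ k, k ≠ i → w k < w i} with hT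
  have hTmeas : ∀ i, MeasurableSet (T i) := by
    intro i
    have h1 : T i = ⋂ k, {w : Fin (n + 1) → ℝ | k ≠ i → w k < w i} := by
      ext w; simp [hT, Set.mem_iInter]
    rw [h1]
    refine MeasurableSet.iInter fun k => ?_
    by_cases hk : k = i
    · simp [hk]
    · simpa [hk] using measurableSet_lt (measurable_pi_apply k) (measurable_pi_apply i)
  have heq : ∀ i, μpi (T i) = μpi (T (Fin.last n)) := by
    intro i
    set ψ := MeasurableEquiv.piCongrLeft (fun _ : Fin (n + 1) => ℝ)
      (Equiv.swap i (Fin.last n)) with hψdef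
    have hmp : MeasurePreserving ψ μpi μpi :=
      measurePreserving_piCongrLeft (fun _ => ν) (Equiv.swap i (Fin.last n))
    have hψ : ∀ (w : Fin (n + 1) → ℝ) k, ψ w k = w (Equiv.swap i (Fin.last n) k) := by
      intro w k
      have h1 := MeasurableEquiv.piCongrLeft_apply_apply (Equiv.swap i (Fin.last n))
        (β := fun _ : Fin (n + 1) => ℝ) w (Equiv.swap i (Fin.last n) k)
      rwa [Equiv.swap_apply_self] at h1
    have hpre : ψ ⁻¹' (T (Fin.last n)) = T i := by
      ext w
      simp only [Set.mem_preimage, hT, Set.mem_setOf_eq, hψ, Equiv.swap_apply_right]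
      constructor
      · intro h k hk
        have h2 := h (Equiv.swap i (Fin.last n) k) ?_
        · rwa [Equiv.swap_apply_self] at h2
        · intro hc
          apply hk
          have h3 := congrArg (Equiv.swap i (Fin.last n)) hc
          rwa [Equiv.swap_apply_self, Equiv.swap_apply_right] at h3
      · intro h k hk
        refine h _ fun hc => hk ?_
        have h3 := (Equiv.swap i (Fin.last n)).injective
          (hc.trans (Equiv.swap_apply_right i (Fin.last n)).symm)
        exact h3
    rw [← hpre]
    exact hmp.measure_preimage (hTmeas (Fin.last n)).nullMeasurableSet
  have hdisj : Pairwise (Function.onFun Disjoint T) := by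
    intro a b hab
    rw [Function.onFun, Set.disjoint_left]
    intro w hwa hwb
    exact lt_asymm (hwa b (Ne.symm hab)) (hwb a hab)
  have hsum : ∑ i : Fin (n + 1), μpi (T i) ≤ 1 := by
    rw [← tsum_fintype (L := SummationFilter.unconditional _), ← measure_iUnion hdisj hTmeas]
    exact prob_le_one
  have hmul : ((n : ℝ≥0∞) + 1) * μpi (T (Fin.last n)) ≤ 1 := by
    have h1 : ∑ i : Fin (n + 1), μpi (T i) = ((n : ℝ≥0∞) + 1) * μpi (T (Fin.last n)) := by
      rw [Finset.sum_congr rfl fun i _ => heq i, Finset.sum_const, Finset.card_univ,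
        Fintype.card_fin, nsmul_eq_mul]
      push_cast
      ring
    rw [← h1]
    exact hsum
  rw [ENNReal.le_inv_iff_mul_le, mul_comm]
  exact hmul

/-- If `d ≥ 2`, then almost surely only finitely many of the vectors
`X 1, X 2, …` are complete records. -/
theorem finitely_many_complete_records
    {Ω : Type*} [MeasurableSpace Ω] (P : Measure Ω) [IsProbabilityMeasure P]
    (d : ℕ) (hd : 2 ≤ d) (X : ℕ → Ω → Fin d → ℝ)
    (hmeas : ∀ m, Measurable (X m))
    (hindep : iIndepFun (fun m : ℕ => X (m + 1)) P)
    (hident : ∀ m : ℕ, P.map (X (m + 1)) = P.map (X 1))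
    (hcomp : iIndepFun (fun (j : Fin d) ω => X 1 ω j) P)
    (hcont : ∀ j : Fin d, Continuous fun t : ℝ => (P {ω | X 1 ω j ≤ t}).toReal) :
    ∀ᵐ ω ∂P, {m : ℕ | 1 ≤ m ∧ IsCompleteRecord X m ω}.Finite := by
  classical
  set j₀ : Fin d := ⟨0, by omega⟩ with hj₀
  set j₁ : Fin d := ⟨1, by omega⟩ with hj₁
  have hne : j₀ ≠ j₁ := by simp [hj₀, hj₁, Fin.ext_iff]
  have hXm : ∀ m (j : Fin d), Measurable fun ω => X m ω j :=
    fun m j => (measurable_pi_apply j).comp (hmeas m)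
  set ν₀ : Measure ℝ := P.map (fun ω => X 1 ω j₀) with hν₀
  set ν₁ : Measure ℝ := P.map (fun ω => X 1 ω j₁) with hν₁
  have hp₀ : IsProbabilityMeasure ν₀ := Measure.isProbabilityMeasure_map (hXm 1 j₀).aemeasurable
  have hp₁ : IsProbabilityMeasure ν₁ := Measure.isProbabilityMeasure_map (hXm 1 j₁).aemeasurable
  have hρ : P.map (fun ω => (X 1 ω j₀, X 1 ω j₁)) = ν₀.prod ν₁ :=
    (indepFun_iff_map_prod_eq_prod_map_map (hXm 1 j₀).aemeasurable
      (hXm 1 j₁).aemeasurable).mp (hcomp.indepFun hne)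
  set s : ℕ → Set Ω := fun m => {ω | 1 ≤ m ∧ IsCompleteRecord X m ω} with hs
  have hproj : Measurable (fun v : Fin d → ℝ => (v j₀, v j₁)) :=
    (measurable_pi_apply j₀).prodMk (measurable_pi_apply j₁)
  have key : ∀ n : ℕ, P (s (n + 1)) ≤ ((n : ℝ≥0∞) + 1)⁻¹ * ((n : ℝ≥0∞) + 1)⁻¹ := by
    intro n
    set Y : Ω → Fin (n + 1) → ℝ × ℝ :=
      fun ω k => (X (k.val + 1) ω j₀, X (k.val + 1) ω j₁) with hY
    have hYmeas : Measurable Y :=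
      measurable_pi_lambda _ fun k => (hXm _ j₀).prodMk (hXm _ j₁)
    have hmap : P.map Y = Measure.pi (fun _ : Fin (n + 1) => ν₀.prod ν₁) := by
      refine (Measure.pi_eq fun t ht => ?_).symm
      set t' : ℕ → Set (ℝ × ℝ) := fun i => if h : i < n + 1 then t ⟨i, h⟩ else Set.univ
        with ht'
      have ht'meas : ∀ i, MeasurableSet (t' i) := by
        intro i; simp only [ht']; split <;> simp [ht]
      have hpre : Y ⁻¹' Set.pi Set.univ t =
          ⋂ i ∈ Finset.range (n + 1),
            (fun ω => X (i + 1) ω) ⁻¹' ((fun v : Fin d → ℝ => (v j₀, v j₁)) ⁻¹' t' i) := by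
        ext ω
        simp only [Set.mem_preimage, Set.mem_pi, Set.mem_univ, forall_true_left,
          Set.mem_iInter, Finset.mem_range]
        constructor
        · intro h i hi
          simpa only [ht', dif_pos hi, hY] using h ⟨i, hi⟩
        · intro h k
          simpa only [ht', dif_pos k.isLt, hY] using h k.val k.isLt
      have hbi := hindep.meas_biInter (S := Finset.range (n + 1))
        (s := fun i => (fun ω => X (i + 1) ω) ⁻¹'
          ((fun v : Fin d → ℝ => (v j₀, v j₁)) ⁻¹' t' i))
        (fun i _ => ⟨_, hproj (ht'meas i), rfl⟩)
      rw [Measure.map_apply hYmeas (MeasurableSet.univ_pi ht), hpre, hbi]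
      have hfac : ∀ i : ℕ,
          P ((fun ω => X (i + 1) ω) ⁻¹' ((fun v : Fin d → ℝ => (v j₀, v j₁)) ⁻¹' t' i))
            = (ν₀.prod ν₁) (t' i) := by
        intro i
        rw [← Measure.map_apply (hmeas (i + 1)) (hproj (ht'meas i)), hident i,
          ← Measure.map_apply hproj (ht'meas i), Measure.map_map hproj (hmeas 1)]
        have hcomp1 : (fun v : Fin d → ℝ => (v j₀, v j₁)) ∘ X 1
            = fun ω => (X 1 ω j₀, X 1 ω j₁) := rfl
        rw [hcomp1, hρ]
      calc ∏ i ∈ Finset.range (n + 1),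
            P ((fun ω => X (i + 1) ω) ⁻¹' ((fun v : Fin d → ℝ => (v j₀, v j₁)) ⁻¹' t' i))
          = ∏ i ∈ Finset.range (n + 1), (ν₀.prod ν₁) (t' i) :=
            Finset.prod_congr rfl fun i _ => hfac i
        _ = ∏ k : Fin (n + 1), (ν₀.prod ν₁) (t k) := by
            rw [← Fin.prod_univ_eq_prod_range (fun i => (ν₀.prod ν₁) (t' i)) (n + 1)]
            exact Finset.prod_congr rfl fun k _ => by simp only [ht', dif_pos k.isLt]
    set T : Set (Fin (n + 1) → ℝ) :=
      {w | ∀ k, k ≠ Fin.last n → w k < w (Fin.last n)} with hTdef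
    have hTmeas : MeasurableSet T := by
      have h1 : T = ⋂ k, {w : Fin (n + 1) → ℝ | k ≠ Fin.last n → w k < w (Fin.last n)} := by
        ext w; simp [hTdef, Set.mem_iInter]
      rw [h1]
      refine MeasurableSet.iInter fun k => ?_
      by_cases hk : k = Fin.last n
      · simp [hk]
      · simpa [hk] using
          measurableSet_lt (measurable_pi_apply k) (measurable_pi_apply (Fin.last n))
    set e := MeasurableEquiv.arrowProdEquivProdArrow ℝ ℝ (Fin (n + 1)) with he
    have hsub : s (n + 1) ⊆ Y ⁻¹' (e ⁻¹' (T ×ˢ T)) := by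
      intro ω hω
      obtain ⟨-, hrec⟩ := hω
      have hmem : ∀ j : Fin d, (fun k : Fin (n + 1) => X (k.val + 1) ω j) ∈ T := by
        intro j k hk
        have h1 : k.val + 1 < n + 1 := Nat.succ_lt_succ (Fin.val_lt_last hk)
        have h2 := hrec (k.val + 1) (Nat.le_add_left 1 _) (by simpa [Fin.val_last] using h1) j
        simpa [Fin.val_last] using h2
      exact ⟨hmem j₀, hmem j₁⟩
    have hprodmp :=
      measurePreserving_arrowProdEquivProdArrow ℝ ℝ (Fin (n + 1))
        (fun _ => ν₀) (fun _ => ν₁)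
    calc P (s (n + 1)) ≤ P (Y ⁻¹' (e ⁻¹' (T ×ˢ T))) := measure_mono hsub
      _ = (P.map Y) (e ⁻¹' (T ×ˢ T)) :=
          (Measure.map_apply hYmeas (e.measurable (hTmeas.prod hTmeas))).symm
      _ = ((Measure.pi fun _ : Fin (n + 1) => ν₀).prod
            (Measure.pi fun _ : Fin (n + 1) => ν₁)) (T ×ˢ T) := by
          rw [hmap]
          exact hprodmp.measure_preimage (hTmeas.prod hTmeas).nullMeasurableSet
      _ = (Measure.pi fun _ : Fin (n + 1) => ν₀) T
            * (Measure.pi fun _ : Fin (n + 1) => ν₁) T := Measure.prod_prod T T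
      _ ≤ ((n : ℝ≥0∞) + 1)⁻¹ * ((n : ℝ≥0∞) + 1)⁻¹ :=
          mul_le_mul' (pi_measure_strictMax_le ν₀ n) (pi_measure_strictMax_le ν₁ n)
  -- summability
  set g : ℕ → ℝ≥0 := fun m => (m : ℝ≥0)⁻¹ * (m : ℝ≥0)⁻¹ with hg
  have hcast : ∀ n : ℕ, (g (n + 1) : ℝ≥0∞) = ((n : ℝ≥0∞) + 1)⁻¹ * ((n : ℝ≥0∞) + 1)⁻¹ := by
    intro n
    have hne0 : ((n + 1 : ℕ) : ℝ≥0) ≠ 0 := Nat.cast_ne_zero.mpr (Nat.succ_ne_zero n)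
    simp only [hg]
    rw [ENNReal.coe_mul, ENNReal.coe_inv hne0]
    push_cast
    ring
  have hgsum : Summable g := by
    rw [← NNReal.summable_coe]
    have h2 : Summable (fun m : ℕ => 1 / (m : ℝ) ^ 2) :=
      Real.summable_one_div_nat_pow.mpr one_lt_two
    refine h2.congr fun m => ?_
    simp only [hg, NNReal.coe_mul, NNReal.coe_inv, NNReal.coe_natCast]
    rw [one_div, sq, mul_inv]
  have hbound : ∀ m : ℕ, P (s m) ≤ (g m : ℝ≥0∞) := by
    intro m
    cases m with
    | zero => simp [hs]
    | succ n => rw [hcast n]; exact key n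
  have hfin : (∑' m, P (s m)) ≠ ∞ := by
    refine ne_top_of_le_ne_top ?_ (ENNReal.tsum_le_tsum hbound)
    exact ENNReal.tsum_coe_ne_top_iff_summable.mpr hgsum
  filter_upwards [MeasureTheory.ae_finite_setOf_mem hfin] with ω hω
  exact hω
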